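/- For every nonnegative integer n and every real x > 2, the polynomial Fₙ(x) := ₂F₁(-n, 1/2; 1; x) satisfies |Fₙ(x)| ≤ (x-1)ⁿ, and Fₙ(x) has the sign (-1)ⁿ. -/
import Mathlib
open scoped Nat

/-- Pochhammer symbol `(a)_j` for real `a`. -/
noncomputable def poch (a : ℝ) (j : ℕ) : ℝ := (ascPochhammer ℝ j).eval a

/-- The terminating hypergeometric polynomial `Fₙ(x) = ₂F₁(-n, 1/2; 1; x)`. -/
noncomputable def F (n : ℕ) (x : ℝ) : ℝ :=
  ∑ j ∈ Finset.range (n + 1),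
    poch (-(n : ℝ)) j * poch (1/2) j / ((j ! : ℝ) ^ 2) * x ^ j

lemma poch_zero' (a : ℝ) : poch a 0 = 1 := by simp [poch]

lemma poch_succ_right (a : ℝ) (j : ℕ) : poch a (j+1) = poch a j * (a + j) := by
  simp [poch, ascPochhammer_succ_right]

lemma poch_succ_left (a : ℝ) (j : ℕ) : poch a (j+1) = a * poch (a+1) j := by
  simp [poch, ascPochhammer_succ_left]

lemma poch_one' (a : ℝ) : poch a 1 = a := by
  rw [show (1:ℕ) = 0 + 1 from rfl, poch_succ_right, poch_zero']; simp

lemma poch_shift (a : ℝ) (k : ℕ) : poch (a - 1) (k+1) = (a-1) * poch a k := by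
  rw [poch_succ_left, show a - 1 + 1 = a by ring]

noncomputable def c (n j : ℕ) : ℝ := poch (-(n : ℝ)) j * poch (1/2) j / ((j ! : ℝ) ^ 2)

lemma F_eq (n : ℕ) (x : ℝ) : F n x = ∑ j ∈ Finset.range (n+1), c n j * x ^ j := rfl

lemma c_zero_eq (n : ℕ) : c n 0 = 1 := by simp [c, poch_zero']

lemma poch_neg_vanish (n m : ℕ) : poch (-(n : ℝ)) (n + 1 + m) = 0 := by
  induction m with
  | zero =>
    have h : poch (-(n:ℝ)) (n+1) = poch (-(n:ℝ)) n * (-(n:ℝ) + n) := poch_succ_right _ _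
    simpa using h
  | succ k ih =>
    rw [show n+1+(k+1) = n+1+k+1 from rfl, poch_succ_right, ih, zero_mul]

lemma c_vanish {n j : ℕ} (h : n < j) : c n j = 0 := by
  obtain ⟨m, rfl⟩ := Nat.exists_eq_add_of_le h
  simp [c, poch_neg_vanish]

lemma F_eq' (n N : ℕ) (h : n + 1 ≤ N) (x : ℝ) :
    F n x = ∑ j ∈ Finset.range N, c n j * x ^ j := by
  rw [F_eq]
  refine Finset.sum_subset (Finset.range_subset_range.2 h) ?_
  intro j hj hj'
  rw [c_vanish (by simp at hj'; omega), zero_mul]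

lemma key (n j : ℕ) :
    ((n:ℝ)+2) * c (n+2) (j+1)
      = ((2*(n:ℝ)+3) * c (n+1) (j+1) - ((n:ℝ)+1) * c n (j+1))
        + (((n:ℝ)+1) * c n j - ((n:ℝ)+3/2) * c (n+1) j) := by
  cases j with
  | zero =>
    norm_num [c, poch_one', poch_zero']
    ring
  | succ k =>
    have h1 : ((k:ℝ)+1) ≠ 0 := by positivity
    have h2 : ((k:ℝ)+2) ≠ 0 := by positivity
    have hf : ((k)! : ℝ) ≠ 0 := by
      exact_mod_cast Nat.cast_ne_zero.2 (Nat.factorial_ne_zero k)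
    have hf1 : (((k+1))! : ℝ) = ((k:ℝ)+1) * ((k)! : ℝ) := by
      push_cast [Nat.factorial_succ]; ring
    have hf2 : (((k+1+1))! : ℝ) = ((k:ℝ)+2) * ((k:ℝ)+1) * ((k)! : ℝ) := by
      push_cast [Nat.factorial_succ]; ring
    have h22 : poch (-((n:ℝ)+2)) (k+1+1) = ((n:ℝ)+2)*((n:ℝ)+1) * poch (-(n:ℝ)) k := by
      rw [show -((n:ℝ)+2) = (-(n:ℝ)-1) - 1 by ring, poch_shift, poch_shift]
      ring
    have h12 : poch (-((n:ℝ)+1)) (k+1+1)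
        = -((n:ℝ)+1) * (poch (-(n:ℝ)) k * (-(n:ℝ) + k)) := by
      rw [show -((n:ℝ)+1) = -(n:ℝ) - 1 by ring, poch_shift, poch_succ_right]
    have h02 : poch (-(n:ℝ)) (k+1+1)
        = poch (-(n:ℝ)) k * (-(n:ℝ) + k) * (-(n:ℝ) + k + 1) := by
      rw [poch_succ_right, poch_succ_right]
      push_cast
      ring
    have h11 : poch (-((n:ℝ)+1)) (k+1) = -((n:ℝ)+1) * poch (-(n:ℝ)) k := by
      rw [show -((n:ℝ)+1) = -(n:ℝ) - 1 by ring, poch_shift]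
    have h01 : poch (-(n:ℝ)) (k+1) = poch (-(n:ℝ)) k * (-(n:ℝ) + k) := poch_succ_right _ _
    have hB2 : poch (1/2:ℝ) (k+1+1) = poch (1/2:ℝ) k * (1/2 + k) * (1/2 + k + 1) := by
      rw [poch_succ_right, poch_succ_right]
      push_cast
      ring
    have hB1 : poch (1/2:ℝ) (k+1) = poch (1/2:ℝ) k * (1/2 + k) := poch_succ_right _ _
    simp only [c]
    push_cast
    rw [h22, h12, h02, h11, h01, hB2, hB1, hf1, hf2]
    field_simp
    ring

lemma F_rec (n : ℕ) (x : ℝ) :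
    ((n:ℝ)+2) * F (n+2) x
      = ((n:ℝ)+3/2)*(2-x)*F (n+1) x + ((n:ℝ)+1)*(x-1)*F n x := by
  have hL : ((n:ℝ)+2) * F (n+2) x
      = ((n:ℝ)+2)*c (n+2) 0
        + ∑ j ∈ Finset.range (n+3), (((n:ℝ)+2)*c (n+2) (j+1)) * x^(j+1) := by
    rw [F_eq' (n+2) (n+4) (by omega), Finset.mul_sum,
      Finset.sum_range_succ' (fun j => ((n:ℝ)+2) * (c (n+2) j * x ^ j)) (n+3)]
    simp only [pow_zero, mul_one]
    rw [add_comm]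
    congr 1
    exact Finset.sum_congr rfl fun j _ => by ring
  have hR : ((n:ℝ)+3/2)*(2-x)*F (n+1) x + ((n:ℝ)+1)*(x-1)*F n x
      = ((2*(n:ℝ)+3) * c (n+1) 0 - ((n:ℝ)+1) * c n 0)
        + ∑ j ∈ Finset.range (n+3),
            (((2*(n:ℝ)+3) * c (n+1) (j+1) - ((n:ℝ)+1) * c n (j+1))
              + (((n:ℝ)+1) * c n j - ((n:ℝ)+3/2) * c (n+1) j)) * x^(j+1) := by
    rw [F_eq' (n+1) (n+3) (by omega), F_eq' n (n+3) (by omega)]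
    have step1 : ((n:ℝ)+3/2)*(2-x) * (∑ j ∈ Finset.range (n+3), c (n+1) j * x ^ j)
          + ((n:ℝ)+1)*(x-1) * (∑ j ∈ Finset.range (n+3), c n j * x ^ j)
        = (∑ j ∈ Finset.range (n+3),
            ((2*(n:ℝ)+3) * c (n+1) j - ((n:ℝ)+1) * c n j) * x ^ j)
          + ∑ j ∈ Finset.range (n+3),
            (((n:ℝ)+1) * c n j - ((n:ℝ)+3/2) * c (n+1) j) * x ^ (j+1) := by
      rw [Finset.mul_sum, Finset.mul_sum, ← Finset.sum_add_distrib, ← Finset.sum_add_distrib]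
      exact Finset.sum_congr rfl fun j _ => by rw [pow_succ]; ring
    rw [step1]
    have ext1 : (∑ j ∈ Finset.range (n+3),
            ((2*(n:ℝ)+3) * c (n+1) j - ((n:ℝ)+1) * c n j) * x ^ j)
        = ∑ j ∈ Finset.range (n+4),
            ((2*(n:ℝ)+3) * c (n+1) j - ((n:ℝ)+1) * c n j) * x ^ j := by
      rw [Finset.sum_range_succ (fun j => ((2*(n:ℝ)+3) * c (n+1) j - ((n:ℝ)+1) * c n j) * x ^ j) (n+3)]
      rw [c_vanish (show n+1 < n+3 by omega), c_vanish (show n < n+3 by omega)]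
      ring
    rw [ext1,
      Finset.sum_range_succ' (fun j => ((2*(n:ℝ)+3) * c (n+1) j - ((n:ℝ)+1) * c n j) * x ^ j) (n+3)]
    simp only [pow_zero, mul_one]
    rw [add_right_comm, add_comm]
    congr 1
    rw [← Finset.sum_add_distrib]
    exact Finset.sum_congr rfl fun j _ => by ring
  rw [hL, hR]
  congr 1
  · rw [c_zero_eq, c_zero_eq, c_zero_eq]; ring
  · exact Finset.sum_congr rfl fun j _ => by rw [key n j]

lemma F_pos_bound (n : ℕ) :
    ∀ x : ℝ, 2 < x → 0 < (-1:ℝ)^n * F n x ∧ (-1:ℝ)^n * F n x ≤ (x-1)^n := by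
  have main : ∀ m : ℕ,
      (∀ x : ℝ, 2 < x → 0 < (-1:ℝ)^m * F m x ∧ (-1:ℝ)^m * F m x ≤ (x-1)^m)
      ∧ (∀ x : ℝ, 2 < x → 0 < (-1:ℝ)^(m+1) * F (m+1) x ∧ (-1:ℝ)^(m+1) * F (m+1) x ≤ (x-1)^(m+1)) := by
    intro m
    induction m with
    | zero =>
      constructor
      · intro x hx
        have h0 : F 0 x = 1 := by simp [F, poch_zero']
        rw [h0]; norm_num
      · intro x hx
        have h1 : F 1 x = 1 - x/2 := by
          rw [F_eq, Finset.sum_range_succ, Finset.sum_range_one, c_zero_eq]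
          have : c 1 1 = -(1/2) := by
            simp [c, poch_one']
          rw [this]; ring
        rw [h1]
        constructor
        · nlinarith
        · nlinarith
    | succ k ih =>
      refine ⟨ih.2, ?_⟩
      intro x hx
      obtain ⟨p0, b0⟩ := ih.1 x hx
      obtain ⟨p1, b1⟩ := ih.2 x hx
      have hrec := F_rec k x
      have e1 : (-1:ℝ)^(k+1) = -(-1:ℝ)^k := by rw [pow_succ]; ring
      have e2 : (-1:ℝ)^(k+2) = (-1:ℝ)^k := by rw [pow_add]; norm_num
      have hG : ((k:ℝ)+2) * ((-1:ℝ)^(k+2) * F (k+2) x)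
          = ((k:ℝ)+3/2)*(x-2)*((-1:ℝ)^(k+1) * F (k+1) x)
            + ((k:ℝ)+1)*(x-1)*((-1:ℝ)^k * F k x) := by
        rw [e1, e2]
        linear_combination ((-1:ℝ)^k) * hrec
      have hk2 : (0:ℝ) < (k:ℝ)+2 := by positivity
      have hA : (0:ℝ) < (x-1)^(k+1) := by
        apply pow_pos; linarith
      have e3 : (x-1)^(k+2) = (x-1)*(x-1)^(k+1) := by rw [pow_succ]; ring
      have e4 : (x-1)^(k+1) = (x-1)*(x-1)^k := by rw [pow_succ]; ring
      have hpos : 0 < (-1:ℝ)^(k+2) * F (k+2) x := by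
        nlinarith [mul_pos (mul_pos (show (0:ℝ) < (k:ℝ)+3/2 by positivity) (show (0:ℝ) < x-2 by linarith)) p1,
          mul_pos (mul_pos (show (0:ℝ) < (k:ℝ)+1 by positivity) (show (0:ℝ) < x-1 by linarith)) p0]
      refine ⟨hpos, ?_⟩
      have hb1 : ((k:ℝ)+3/2)*(x-2)*((-1:ℝ)^(k+1) * F (k+1) x)
          ≤ ((k:ℝ)+3/2)*(x-2)*(x-1)^(k+1) := by
        apply mul_le_mul_of_nonneg_left b1
        nlinarith
      have hb0 : ((k:ℝ)+1)*(x-1)*((-1:ℝ)^k * F k x)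
          ≤ ((k:ℝ)+1)*(x-1)*(x-1)^k := by
        apply mul_le_mul_of_nonneg_left b0
        nlinarith
      nlinarith [mul_pos hA (show (0:ℝ) < x/2 by linarith), hG, hb1, hb0]
  exact fun x hx => (main n).1 x hx

theorem F_abs_bound_and_sign (n : ℕ) (x : ℝ) (hx : 2 < x) :
    |F n x| ≤ (x - 1) ^ n ∧ 0 < (-1 : ℝ) ^ n * F n x := by
  obtain ⟨hpos, hbound⟩ := F_pos_bound n x hx
  refine ⟨?_, hpos⟩
  have habs : |F n x| = (-1:ℝ)^n * F n x := by
    have h1 : |F n x| = |(-1:ℝ)^n * F n x| := by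
      rw [abs_mul, abs_pow, abs_neg, abs_one, one_pow, one_mul]
    rw [h1, abs_of_pos hpos]
  rw [habs]; exact hbound
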